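/- Given the MIMO rate R(V) = log det(I_L + V^H H^H J̄^{-1} H V) with J̄ positive definite, R(V) = max over positive definite W and matrices G of [log det(W) - tr(W·E(V,G)) + L], where E(V,G) = I_L - 2Re(G^H H V) + G^H (H V V^H H^H + J̄) G, and the optimizer is G* = (H V V^H H^H + J̄)^{-1} H V, W* = E(V,G*)^{-1}. -/

import Mathlib

open Matrix
open scoped ComplexOrder

section WmmseAux

variable {n : Type*} [Fintype n] [DecidableEq n]

open scoped MatrixOrder

lemma trace_eq_sum_eig {A : Matrix n n ℂ} (hA : A.IsHermitian) :
    A.trace = ∑ i, (hA.eigenvalues i : ℂ) := by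
  exact hA.trace_eq_sum_eigenvalues

lemma psd_trace_re_nonneg {A : Matrix n n ℂ} (hA : A.PosSemidef) : 0 ≤ A.trace.re := by
  rw [trace_eq_sum_eig hA.1]
  rw [Complex.re_sum]
  exact Finset.sum_nonneg fun i _ => by simpa using hA.eigenvalues_nonneg i

lemma psd_trace_mul_re_nonneg {W X : Matrix n n ℂ} (hW : W.PosSemidef) (hX : X.PosSemidef) :
    0 ≤ (W * X).trace.re := by
  have h1 : W * X = CFC.sqrt W * (CFC.sqrt W * X) := by
    rw [← mul_assoc, CFC.sqrt_mul_sqrt_self W hW.nonneg]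
  have h2 : (W * X).trace = ((CFC.sqrt W)ᴴ * X * CFC.sqrt W).trace := by
    rw [h1, trace_mul_comm, (CFC.sqrt_nonneg W).posSemidef.1, mul_assoc]
  rw [h2]
  exact psd_trace_re_nonneg (hX.conjTranspose_mul_mul_same (CFC.sqrt W))

lemma posdef_conj {W Q : Matrix n n ℂ} (hW : W.PosDef) (hQ : IsUnit Q) :
    (Qᴴ * W * Q).PosDef := by
  exact hW.conjTranspose_mul_mul_same (mulVec_injective_of_isUnit hQ)

lemma log_det_le_trace {P : Matrix n n ℂ} (hP : P.PosDef) :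
    Real.log P.det.re ≤ P.trace.re - Fintype.card n := by
  have hdet : P.det.re = ∏ i, hP.1.eigenvalues i := by
    rw [hP.1.det_eq_prod_eigenvalues]
    norm_cast
  have htr : P.trace.re = ∑ i, hP.1.eigenvalues i := by
    rw [trace_eq_sum_eig hP.1]
    norm_cast
  rw [hdet, htr]
  have hpos := hP.eigenvalues_pos
  rw [Real.log_prod fun i _ => (hpos i).ne']
  calc ∑ i, Real.log (hP.1.eigenvalues i)
      ≤ ∑ i, (hP.1.eigenvalues i - 1) :=
        Finset.sum_le_sum fun i _ => Real.log_le_sub_one_of_pos (hpos i)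
    _ = ∑ i, hP.1.eigenvalues i - Fintype.card n := by
        rw [Finset.sum_sub_distrib]
        simp

lemma posdef_det_re_pos {A : Matrix n n ℂ} (hA : A.PosDef) : 0 < A.det.re :=
  (RCLike.pos_iff.mp hA.det_pos).1

lemma posdef_det_im_zero {A : Matrix n n ℂ} (hA : A.PosDef) : A.det.im = 0 :=
  (RCLike.pos_iff.mp hA.det_pos).2

lemma key_ineq {W S : Matrix n n ℂ} (hW : W.PosDef) (hS : S.PosDef) :
    Real.log W.det.re - (W * S).trace.re + Fintype.card n ≤ - Real.log S.det.re := by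
  set Q := CFC.sqrt S with hQdef
  have hQH : Qᴴ = Q := (CFC.sqrt_nonneg S).posSemidef.1
  have hQQ : Q * Q = S := CFC.sqrt_mul_sqrt_self S hS.posSemidef.nonneg
  have hdQ : Q.det * Q.det = S.det := by rw [← det_mul, hQQ]
  have hSdet : S.det ≠ 0 := hS.det_pos.ne'
  have hQdet : Q.det ≠ 0 := fun h => hSdet (by rw [← hdQ, h, mul_zero])
  have hQunit : IsUnit Q := (Matrix.isUnit_iff_isUnit_det _).2 (isUnit_iff_ne_zero.2 hQdet)
  have hP : (Qᴴ * W * Q).PosDef := posdef_conj hW hQunit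
  have htr : (Qᴴ * W * Q).trace = (W * S).trace := by
    rw [hQH, mul_assoc, trace_mul_comm, mul_assoc, hQQ]
  have hdet : (Qᴴ * W * Q).det = W.det * S.det := by
    rw [hQH, det_mul, det_mul, ← hdQ]; ring
  have hdetre : (Qᴴ * W * Q).det.re = W.det.re * S.det.re := by
    rw [hdet, Complex.mul_re, posdef_det_im_zero hW, zero_mul, sub_zero]
  have h1 := log_det_le_trace hP
  rw [htr, hdetre, Real.log_mul (posdef_det_re_pos hW).ne' (posdef_det_re_pos hS).ne'] at h1
  linarith

end WmmseAux

/-- The wMMSE equivalence (Shi et al.): the MIMO rate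
`R(V) = log det (I + Vᴴ Hᴴ J̄⁻¹ H V)` is the maximum over positive definite
weights `W` and receivers `G` of `log det W - tr (W E(V,G)) + L`, where
`E(V,G) = I - G^H H V - (G^H H V)^H + G^H (H V V^H H^H + J̄) G`, and the
maximum is attained at `G⋆ = (H V Vᴴ Hᴴ + J̄)⁻¹ H V`, `W⋆ = E(V,G⋆)⁻¹`. -/
theorem wmmse_rate_equivalence {L M : ℕ}
    (H : Matrix (Fin L) (Fin M) ℂ) (V : Matrix (Fin M) (Fin L) ℂ)
    (Jbar : Matrix (Fin L) (Fin L) ℂ) (hJ : Jbar.PosDef)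
    (E : Matrix (Fin L) (Fin L) ℂ → Matrix (Fin L) (Fin L) ℂ)
    (hE : ∀ G, E G = 1 - Gᴴ * H * V - (Gᴴ * H * V)ᴴ
        + Gᴴ * (H * V * Vᴴ * Hᴴ + Jbar) * G)
    (R : ℝ) (hR : R = Real.log (1 + Vᴴ * Hᴴ * Jbar⁻¹ * H * V).det.re)
    (Gstar Wstar : Matrix (Fin L) (Fin L) ℂ)
    (hG : Gstar = (H * V * Vᴴ * Hᴴ + Jbar)⁻¹ * (H * V))
    (hW : Wstar = (E Gstar)⁻¹) :
    IsGreatest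
      {x : ℝ | ∃ (W G : Matrix (Fin L) (Fin L) ℂ), W.PosDef ∧
        x = Real.log W.det.re - ((W * E G).trace).re + L} R ∧
      Real.log Wstar.det.re - ((Wstar * E Gstar).trace).re + L = R := by
  set A : Matrix (Fin L) (Fin L) ℂ := H * V * Vᴴ * Hᴴ + Jbar with hAdef
  set B : Matrix (Fin L) (Fin L) ℂ := Vᴴ * Hᴴ * Jbar⁻¹ * H * V with hBdef
  -- positivity facts
  have hApd : A.PosDef := by
    rw [hAdef]
    refine Matrix.PosDef.posSemidef_add ?_ hJ
    have := Matrix.posSemidef_self_mul_conjTranspose (H * V)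
    simpa [conjTranspose_mul, Matrix.mul_assoc] using this
  have hBpsd : B.PosSemidef := by
    have := (hJ.inv.posSemidef).conjTranspose_mul_mul_same (H * V)
    simpa [hBdef, conjTranspose_mul, Matrix.mul_assoc] using this
  have hAd : IsUnit A.det := hApd.det_pos.ne'.isUnit
  have hJd : IsUnit Jbar.det := hJ.det_pos.ne'.isUnit
  have hAG : A * Gstar = H * V := by
    rw [hG, Matrix.mul_nonsing_inv_cancel_left _ _ hAd]
  have hGA : Gstarᴴ * A = (H * V)ᴴ := by
    calc Gstarᴴ * A = (Aᴴ * Gstar)ᴴ := by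
          rw [conjTranspose_mul, conjTranspose_conjTranspose]
      _ = (A * Gstar)ᴴ := by rw [hApd.1.eq]
      _ = (H * V)ᴴ := by rw [hAG]
  have hS : E Gstar = 1 - (H * V)ᴴ * Gstar := by
    rw [hE]
    have h1 : Gstarᴴ * (H * V * Vᴴ * Hᴴ + Jbar) * Gstar = (H * V)ᴴ * Gstar := by
      rw [← hAdef, hGA]
    have h2 : Gstarᴴ * H * V = (H * V)ᴴ * Gstar := by
      rw [Matrix.mul_assoc, ← hAG, ← Matrix.mul_assoc, hGA, hAG]
    have h3 : (Gstarᴴ * H * V)ᴴ = (H * V)ᴴ * Gstar := by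
      rw [h2, conjTranspose_mul, conjTranspose_conjTranspose, ← hGA, Matrix.mul_assoc, hAG]
    rw [h1, h2]
    have hXh : ((H * V)ᴴ * Gstar)ᴴ = (H * V)ᴴ * Gstar := by
      conv_lhs => rw [← h2]
      rw [h3]
    rw [hXh]
    abel
  -- Woodbury
  have e1 : H * V + (H * V) * B = A * (Jbar⁻¹ * (H * V)) := by
    rw [hAdef, hBdef]
    simp only [Matrix.add_mul, Matrix.mul_nonsing_inv_cancel_left _ _ hJd, Matrix.mul_assoc]
    abel
  have e2 : B = (H * V)ᴴ * Gstar + (H * V)ᴴ * Gstar * B := by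
    rw [hG]
    calc B = (H * V)ᴴ * (Jbar⁻¹ * (H * V)) := by
          rw [hBdef]; simp only [conjTranspose_mul, Matrix.mul_assoc]
      _ = (H * V)ᴴ * (A⁻¹ * (A * (Jbar⁻¹ * (H * V)))) := by
          rw [Matrix.nonsing_inv_mul_cancel_left _ _ hAd]
      _ = (H * V)ᴴ * (A⁻¹ * (H * V + (H * V) * B)) := by rw [← e1]
      _ = (H * V)ᴴ * (A⁻¹ * (H * V)) + (H * V)ᴴ * (A⁻¹ * (H * V)) * B := by
          noncomm_ring
  have hSB : (E Gstar) * (1 + B) = 1 := by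
    rw [hS, Matrix.sub_mul, Matrix.one_mul, Matrix.mul_add, Matrix.mul_one, ← e2]
    abel
  have h1B : (1 + B).PosDef := Matrix.PosDef.add_posSemidef Matrix.PosDef.one hBpsd
  have hSinv : (E Gstar)⁻¹ = 1 + B := Matrix.inv_eq_right_inv hSB
  have hWeq : Wstar = 1 + B := by rw [hW, hSinv]
  have hWpd : Wstar.PosDef := hWeq ▸ h1B
  have hBS : (1 + B) * (E Gstar) = 1 := mul_eq_one_comm.mp hSB
  have hEGpd : (E Gstar).PosDef := by
    have h := Matrix.inv_eq_left_inv hSB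
    rw [← h]
    exact h1B.inv
  have hWSone : Wstar * E Gstar = 1 := by rw [hWeq]; exact hBS
  have htrone : ((Wstar * E Gstar).trace).re = (L : ℝ) := by
    rw [hWSone, trace_one]
    simp
  have hRW : R = Real.log Wstar.det.re := by rw [hR, hWeq, hBdef]
  have hattain : Real.log Wstar.det.re - ((Wstar * E Gstar).trace).re + L = R := by
    rw [htrone, hRW]; ring
  -- the relation -log det(E Gstar) = R
  have hdetone : Wstar.det.re * (E Gstar).det.re = 1 := by
    have h := congrArg Matrix.det hWSone
    rw [det_mul, det_one] at h
    have := congrArg Complex.re h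
    rwa [Complex.mul_re, posdef_det_im_zero hWpd, zero_mul, sub_zero, Complex.one_re] at this
  have hlogS : -Real.log (E Gstar).det.re = R := by
    have h1 : Real.log Wstar.det.re + Real.log (E Gstar).det.re = 0 := by
      rw [← Real.log_mul (posdef_det_re_pos hWpd).ne' (posdef_det_re_pos hEGpd).ne',
        hdetone, Real.log_one]
    rw [hRW]; linarith
  refine ⟨⟨⟨Wstar, Gstar, hWpd, hattain.symm⟩, ?_⟩, hattain⟩
  rintro x ⟨W, G, hWpd', rfl⟩
  -- completion of squares
  have c1 : Gᴴ * A * Gstar = Gᴴ * (H * V) := by rw [Matrix.mul_assoc, hAG]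
  have c2 : Gstarᴴ * A * G = (H * V)ᴴ * G := by rw [hGA]
  have c3 : Gstarᴴ * A * Gstar = (H * V)ᴴ * Gstar := by rw [hGA]
  have hEexp : E G = E Gstar + (G - Gstar)ᴴ * A * (G - Gstar) := by
    rw [hE G, hS, conjTranspose_sub]
    simp only [Matrix.sub_mul, Matrix.mul_sub]
    rw [c1, c2, c3]
    have h4 : (Gᴴ * H * V)ᴴ = (H * V)ᴴ * G := by
      simp only [conjTranspose_mul, conjTranspose_conjTranspose, Matrix.mul_assoc]
    have h5 : Gᴴ * H * V = Gᴴ * (H * V) := by rw [Matrix.mul_assoc]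
    rw [h4, h5]
    abel
  have hpsd2 : ((G - Gstar)ᴴ * A * (G - Gstar)).PosSemidef :=
    hApd.posSemidef.conjTranspose_mul_mul_same _
  have htr_ge : ((W * E Gstar).trace).re ≤ ((W * E G).trace).re := by
    rw [hEexp, Matrix.mul_add, trace_add, Complex.add_re]
    have := psd_trace_mul_re_nonneg hWpd'.posSemidef hpsd2
    linarith
  have hkey := key_ineq hWpd' hEGpd
  rw [Fintype.card_fin] at hkey
  linarith [hlogS]
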